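/- (Jensen Inequality for DR submodular functions on ordered points) Let f : [0,1]^d → ℝ be a C² function all of whose second partial derivatives are nonpositive (DR submodular), and let y : [0,1] → [0,1]^d be an integrable function that is monotone: for all 0 ≤ μ < μ' ≤ 1, y(μ) ≤ y(μ') coordinatewise. Then ∫_0^1 f(y(μ)) dμ ≤ f(∫_0^1 y(μ) dμ). -/

import Mathlib

open MeasureTheory intervalIntegral

lemma clm_apply_eq_sum {d : ℕ} (L : (Fin d → ℝ) →L[ℝ] ℝ) (v : Fin d → ℝ) :
    L v = ∑ j, v j * L (Pi.single j 1) := by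
  have hv : v = ∑ j, v j • (Pi.single j 1 : Fin d → ℝ) := by
    funext i; simp [Finset.sum_apply, Pi.single_apply]
  conv_lhs => rw [hv]
  rw [map_sum]; simp [smul_eq_mul]

lemma ftc_line {d : ℕ} {F : (Fin d → ℝ) → ℝ} (hF : ContDiff ℝ 1 F) (a b : Fin d → ℝ) :
    F b - F a = ∫ t in (0:ℝ)..1, fderiv ℝ F (a + t • (b - a)) (b - a) := by
  have hc : Continuous (fun t : ℝ => a + t • (b - a)) := by continuity
  have hder : ∀ t ∈ Set.uIcc (0:ℝ) 1,
      HasDerivAt (fun s : ℝ => F (a + s • (b - a)))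
        (fderiv ℝ F (a + t • (b - a)) (b - a)) t := by
    intro t _
    have h1 : HasDerivAt (fun s : ℝ => a + s • (b - a)) (b - a) t := by
      simpa using ((hasDerivAt_id t).smul_const (b - a)).const_add a
    have h2 : HasFDerivAt F (fderiv ℝ F (a + t • (b - a))) (a + t • (b - a)) :=
      (hF.differentiable (by norm_num) (a + t • (b - a))).hasFDerivAt
    simpa [Function.comp_def] using h2.comp_hasDerivAt t h1
  have hcontf : Continuous (fun t : ℝ => fderiv ℝ F (a + t • (b - a)) (b - a)) := by
    have h3 : Continuous (fderiv ℝ F) := (hF.fderiv_right (m := 0) (by norm_num)).continuous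
    exact isBoundedBilinearMap_apply.continuous.comp ((h3.comp hc).prodMk continuous_const)
  have := intervalIntegral.integral_eq_sub_of_hasDerivAt hder (hcontf.intervalIntegrable 0 1)
  rw [this]; simp

/-- The gradient of a DR-submodular function is antitone on the box. -/
lemma grad_antitone {d : ℕ} {f : (Fin d → ℝ) → ℝ} (hf : ContDiff ℝ 2 f)
    (hHess : ∀ v : Fin d → ℝ, (∀ k, v k ∈ Set.Icc (0:ℝ) 1) → ∀ i j : Fin d,
      fderiv ℝ (fun w => fderiv ℝ f w (Pi.single i 1)) v (Pi.single j 1) ≤ 0)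
    (k : Fin d) {a b : Fin d → ℝ}
    (ha : ∀ i, a i ∈ Set.Icc (0:ℝ) 1) (hb : ∀ i, b i ∈ Set.Icc (0:ℝ) 1) (hab : a ≤ b) :
    fderiv ℝ f b (Pi.single k 1) ≤ fderiv ℝ f a (Pi.single k 1) := by
  have hg : ContDiff ℝ 1 (fun w => fderiv ℝ f w (Pi.single k 1)) := by
    have h1 : ContDiff ℝ 1 (fderiv ℝ f) := hf.fderiv_right (m := 1) (by norm_num)
    exact (ContinuousLinearMap.apply ℝ ℝ (Pi.single k 1 : Fin d → ℝ)).contDiff.comp h1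
  have key := ftc_line hg a b
  have hbox : ∀ t ∈ Set.Icc (0:ℝ) 1, ∀ i, (a + t • (b - a)) i ∈ Set.Icc (0:ℝ) 1 := by
    intro t ht i
    have h1 := ha i; have h2 := hb i; have h3 := hab i
    simp only [Set.mem_Icc, Pi.add_apply, Pi.smul_apply, Pi.sub_apply, smul_eq_mul] at *
    constructor <;> nlinarith [ht.1, ht.2, h1.1, h2.1, h1.2, h2.2]
  have hnonpos : ∀ t ∈ Set.Icc (0:ℝ) 1,
      fderiv ℝ (fun w => fderiv ℝ f w (Pi.single k 1)) (a + t • (b - a)) (b - a) ≤ 0 := by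
    intro t ht
    rw [clm_apply_eq_sum]
    apply Finset.sum_nonpos
    intro j _
    apply mul_nonpos_of_nonneg_of_nonpos
    · simpa using sub_nonneg.2 (hab j)
    · exact hHess _ (hbox t ht) k j
  have hint : 0 ≤ ∫ t in (0:ℝ)..1,
      -(fderiv ℝ (fun w => fderiv ℝ f w (Pi.single k 1)) (a + t • (b - a)) (b - a)) := by
    apply intervalIntegral.integral_nonneg (by norm_num)
    intro t ht; linarith [hnonpos t ht]
  rw [intervalIntegral.integral_neg] at hint
  linarith [key]

/-- Chebyshev-type inequality: two antitone functions, one with zero mean. -/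
lemma cheb {g h : ℝ → ℝ} (hg : AntitoneOn g (Set.Icc 0 1)) (hh : AntitoneOn h (Set.Icc 0 1))
    (h0 : 0 ≤ h 0) (hzero : (∫ μ in (0:ℝ)..1, h μ) = 0)
    (hgh : IntervalIntegrable (fun μ => h μ * g μ) volume 0 1)
    (hhint : IntervalIntegrable h volume 0 1) :
    0 ≤ ∫ μ in (0:ℝ)..1, h μ * g μ := by
  set S : Set ℝ := {μ | μ ∈ Set.Icc (0:ℝ) 1 ∧ 0 ≤ h μ} with hS
  have h0S : (0:ℝ) ∈ S := ⟨by norm_num, h0⟩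
  have hSne : S.Nonempty := ⟨0, h0S⟩
  have hSbdd : BddAbove S := ⟨1, fun x hx => hx.1.2⟩
  set c := sSup S with hc
  have hc0 : 0 ≤ c := le_csSup hSbdd h0S
  have hc1 : c ≤ 1 := csSup_le hSne fun x hx => hx.1.2
  have hcI : c ∈ Set.Icc (0:ℝ) 1 := ⟨hc0, hc1⟩
  have key : ∀ μ ∈ Set.Icc (0:ℝ) 1, 0 ≤ h μ * (g μ - g c) := by
    intro μ hμ
    rcases le_or_gt 0 (h μ) with hpos | hneg
    · have hμc : μ ≤ c := le_csSup hSbdd ⟨hμ, hpos⟩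
      exact mul_nonneg hpos (sub_nonneg.2 (hg hμ hcI hμc))
    · have hcμ : c ≤ μ := by
        apply csSup_le hSne
        intro x hx
        by_contra hcon
        push_neg at hcon
        exact absurd (hh hμ hx.1 hcon.le) (by linarith [hx.2])
      have h4 := hg hcI hμ hcμ
      have := mul_nonneg (neg_nonneg.2 hneg.le) (neg_nonneg.2 (by linarith : g μ - g c ≤ 0))
      nlinarith
  have h1 : 0 ≤ ∫ μ in (0:ℝ)..1, h μ * (g μ - g c) :=
    intervalIntegral.integral_nonneg (by norm_num) key
  have h2 : (∫ μ in (0:ℝ)..1, h μ * (g μ - g c))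
      = (∫ μ in (0:ℝ)..1, h μ * g μ) - g c * ∫ μ in (0:ℝ)..1, h μ := by
    rw [← intervalIntegral.integral_const_mul]
    rw [← intervalIntegral.integral_sub hgh (hhint.const_mul (g c))]
    congr 1; funext μ; ring
  rw [h2, hzero] at h1
  linarith

set_option maxHeartbeats 1000000 in
theorem jensen_dr_submodular_ordered
    {d : ℕ} (f : (Fin d → ℝ) → ℝ)
    (hf : ContDiff ℝ 2 f)
    (hHess : ∀ v : Fin d → ℝ, (∀ k, v k ∈ Set.Icc (0:ℝ) 1) → ∀ i j : Fin d,
      fderiv ℝ (fun w => fderiv ℝ f w (Pi.single i 1)) v (Pi.single j 1) ≤ 0)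
    (y : ℝ → Fin d → ℝ)
    (hybox : ∀ μ ∈ Set.Icc (0:ℝ) 1, ∀ k, y μ k ∈ Set.Icc (0:ℝ) 1)
    (hymono : ∀ μ ∈ Set.Icc (0:ℝ) 1, ∀ μ' ∈ Set.Icc (0:ℝ) 1, μ < μ' → y μ ≤ y μ')
    (hyint : ∀ k, IntervalIntegrable (fun μ => y μ k) volume 0 1) :
    ∫ μ in (0:ℝ)..1, f (y μ) ≤ f (fun k => ∫ μ in (0:ℝ)..1, y μ k) := by
  classical
  set K : Set (Fin d → ℝ) := Set.Icc 0 1 with hK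
  have hKmem : ∀ x : Fin d → ℝ, (∀ i, x i ∈ Set.Icc (0:ℝ) 1) → x ∈ K := by
    intro x h; exact ⟨fun i => (h i).1, fun i => (h i).2⟩
  set Ybar : Fin d → ℝ := fun k => ∫ μ in (0:ℝ)..1, y μ k with hYbar
  have hymono' : ∀ μ ∈ Set.Icc (0:ℝ) 1, ∀ μ' ∈ Set.Icc (0:ℝ) 1, μ ≤ μ' →
      ∀ k, y μ k ≤ y μ' k := by
    intro μ hμ μ' hμ' hle k
    rcases eq_or_lt_of_le hle with rfl | h
    · exact le_rfl
    · exact hymono μ hμ μ' hμ' h k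
  have hYbarbox : ∀ k, Ybar k ∈ Set.Icc (0:ℝ) 1 := by
    intro k
    constructor
    · exact intervalIntegral.integral_nonneg (by norm_num) fun u hu => (hybox u hu k).1
    · calc (∫ μ in (0:ℝ)..1, y μ k) ≤ ∫ _μ in (0:ℝ)..1, (1:ℝ) :=
            intervalIntegral.integral_mono_on (by norm_num) (hyint k)
              intervalIntegrable_const (fun x hx => (hybox x hx k).2)
        _ = 1 := by simp
  -- measurability of y
  have hy_meas : AEStronglyMeasurable y (volume.restrict (Set.Ioc (0:ℝ) 1)) := by
    have h1 : ∀ k, ∃ g : ℝ → ℝ, Measurable g ∧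
        (fun μ => y μ k) =ᵐ[volume.restrict (Set.Ioc (0:ℝ) 1)] g := by
      intro k
      obtain ⟨g, hg1, hg2⟩ := (hyint k).1.aestronglyMeasurable
      exact ⟨g, hg1.measurable, hg2⟩
    choose g hgm hge using h1
    refine ⟨fun μ k => g k μ, ?_, ?_⟩
    · exact (measurable_pi_iff.2 fun k => hgm k).stronglyMeasurable
    · filter_upwards [MeasureTheory.ae_all_iff.2 hge] with μ hμ
      funext k; exact hμ k
  -- bounds
  have hfd_cont : Continuous (fderiv ℝ f) := (hf.fderiv_right (m := 1) (by norm_num)).continuous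
  obtain ⟨C, hC⟩ := isCompact_Icc.exists_bound_of_continuousOn (hfd_cont.continuousOn (s := K))
  obtain ⟨Cf, hCf⟩ := isCompact_Icc.exists_bound_of_continuousOn (hf.continuous.continuousOn (s := K))
  have hCnn : 0 ≤ C := le_trans (norm_nonneg _) (hC 0 ⟨le_refl _, zero_le_one⟩)
  set w : ℝ → Fin d → ℝ := fun μ => Ybar - y μ with hw
  set z : ℝ → ℝ → Fin d → ℝ := fun t μ => y μ + t • w μ with hz
  have hzbox : ∀ t ∈ Set.Icc (0:ℝ) 1, ∀ μ ∈ Set.Icc (0:ℝ) 1, ∀ k,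
      z t μ k ∈ Set.Icc (0:ℝ) 1 := by
    intro t ht μ hμ k
    have h1 := hybox μ hμ k
    have h2 := hYbarbox k
    simp only [hz, hw, Set.mem_Icc, Pi.add_apply, Pi.smul_apply, Pi.sub_apply,
      smul_eq_mul] at *
    constructor <;> nlinarith [ht.1, ht.2, h1.1, h1.2, h2.1, h2.2]
  have hwnorm : ∀ μ ∈ Set.Icc (0:ℝ) 1, ‖w μ‖ ≤ 1 := by
    intro μ hμ
    rw [pi_norm_le_iff_of_nonneg (by norm_num)]
    intro k
    have h1 := hybox μ hμ k
    have h2 := hYbarbox k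
    simp only [hw, Pi.sub_apply, Real.norm_eq_abs, Set.mem_Icc] at *
    rw [abs_le]; constructor <;> linarith
  have key1 : ∀ μ, f Ybar - f (y μ) = ∫ t in (0:ℝ)..1, fderiv ℝ f (z t μ) (w μ) := by
    intro μ
    simpa [hz, hw] using ftc_line (hf.of_le one_le_two) (y μ) Ybar
  have hfy_int : IntervalIntegrable (fun μ => f (y μ)) volume 0 1 := by
    rw [intervalIntegrable_iff_integrableOn_Ioc_of_le (by norm_num)]
    apply Integrable.mono' (integrable_const Cf)
    · exact hf.continuous.comp_aestronglyMeasurable hy_meas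
    · filter_upwards [ae_restrict_mem measurableSet_Ioc] with μ hμ
      exact hCf _ (hKmem _ (hybox μ (Set.Ioc_subset_Icc_self hμ)))
  rw [← sub_nonneg]
  have key2 : f Ybar - (∫ μ in (0:ℝ)..1, f (y μ)) = ∫ μ in (0:ℝ)..1, (f Ybar - f (y μ)) := by
    rw [intervalIntegral.integral_sub intervalIntegrable_const hfy_int]
    simp
  rw [key2]
  have key3 : (∫ μ in (0:ℝ)..1, (f Ybar - f (y μ)))
      = ∫ μ in Set.Ioc (0:ℝ) 1, ∫ t in Set.Ioc (0:ℝ) 1, fderiv ℝ f (z t μ) (w μ) := by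
    rw [funext key1]
    simp only [intervalIntegral.integral_of_le (show (0:ℝ) ≤ 1 by norm_num)]
  rw [key3]
  haveI : IsFiniteMeasure (volume.restrict (Set.Ioc (0:ℝ) 1)) := ⟨by simp⟩
  have hGint : Integrable (Function.uncurry fun μ t => fderiv ℝ f (z t μ) (w μ))
      ((volume.restrict (Set.Ioc (0:ℝ) 1)).prod (volume.restrict (Set.Ioc (0:ℝ) 1))) := by
    have hΨ : Continuous (fun q : (Fin d → ℝ) × ℝ =>
        fderiv ℝ f (q.1 + q.2 • (Ybar - q.1)) (Ybar - q.1)) := by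
      have h1 : Continuous (fun q : (Fin d → ℝ) × ℝ => fderiv ℝ f (q.1 + q.2 • (Ybar - q.1))) :=
        hfd_cont.comp (continuous_fst.add (continuous_snd.smul (continuous_const.sub continuous_fst)))
      have h2 : Continuous (fun q : (Fin d → ℝ) × ℝ => Ybar - q.1) :=
        continuous_const.sub continuous_fst
      exact isBoundedBilinearMap_apply.continuous.comp (h1.prodMk h2)
    have hpair : AEStronglyMeasurable (fun p : ℝ × ℝ => (y p.1, p.2))
        ((volume.restrict (Set.Ioc (0:ℝ) 1)).prod (volume.restrict (Set.Ioc (0:ℝ) 1))) :=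
      hy_meas.comp_fst.prodMk measurable_snd.aestronglyMeasurable
    have hGmeas : AEStronglyMeasurable (Function.uncurry fun μ t => fderiv ℝ f (z t μ) (w μ))
        ((volume.restrict (Set.Ioc (0:ℝ) 1)).prod (volume.restrict (Set.Ioc (0:ℝ) 1))) := by
      have := hΨ.comp_aestronglyMeasurable hpair
      exact this
    apply Integrable.mono' (integrable_const C) hGmeas
    have hae : ∀ᵐ p ∂((volume.restrict (Set.Ioc (0:ℝ) 1)).prod
        (volume.restrict (Set.Ioc (0:ℝ) 1))),
        p ∈ (Set.Ioc (0:ℝ) 1) ×ˢ (Set.Ioc (0:ℝ) 1) := by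
      rw [Measure.prod_restrict]
      exact ae_restrict_mem (measurableSet_Ioc.prod measurableSet_Ioc)
    filter_upwards [hae] with p hp
    have hp1 : p.1 ∈ Set.Icc (0:ℝ) 1 := Set.Ioc_subset_Icc_self hp.1
    have hp2 : p.2 ∈ Set.Icc (0:ℝ) 1 := Set.Ioc_subset_Icc_self hp.2
    calc ‖Function.uncurry (fun μ t => fderiv ℝ f (z t μ) (w μ)) p‖
        ≤ ‖fderiv ℝ f (z p.2 p.1)‖ * ‖w p.1‖ := (fderiv ℝ f (z p.2 p.1)).le_opNorm _
      _ ≤ C * 1 := mul_le_mul (hC _ (hKmem _ (hzbox p.2 hp2 p.1 hp1)))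
          (hwnorm p.1 hp1) (norm_nonneg _) hCnn
      _ = C := mul_one C
  rw [MeasureTheory.integral_integral_swap hGint]
  apply setIntegral_nonneg measurableSet_Ioc
  intro t ht
  have htI : t ∈ Set.Icc (0:ℝ) 1 := Set.Ioc_subset_Icc_self ht
  rw [← intervalIntegral.integral_of_le (show (0:ℝ) ≤ 1 by norm_num)]
  have hexp : (fun μ => fderiv ℝ f (z t μ) (w μ))
      = fun μ => ∑ k, w μ k * fderiv ℝ f (z t μ) (Pi.single k 1) :=
    funext fun μ => clm_apply_eq_sum _ _
  rw [hexp]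
  have hterm_int : ∀ k, IntervalIntegrable
      (fun μ => w μ k * fderiv ℝ f (z t μ) (Pi.single k 1)) volume 0 1 := by
    intro k
    rw [intervalIntegrable_iff_integrableOn_Ioc_of_le (by norm_num)]
    apply Integrable.mono' (integrable_const (C * ‖(Pi.single k 1 : Fin d → ℝ)‖))
    · have hΘ : Continuous (fun v : Fin d → ℝ =>
          (Ybar k - v k) * fderiv ℝ f (v + t • (Ybar - v)) (Pi.single k 1)) := by
        have h1 : Continuous (fun v : Fin d → ℝ => Ybar k - v k) :=
          continuous_const.sub (continuous_apply k)
        have h2 : Continuous (fun v : Fin d → ℝ => v + t • (Ybar - v)) :=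
          continuous_id.add ((continuous_const.sub continuous_id).const_smul t)
        exact h1.mul (isBoundedBilinearMap_apply.continuous.comp
          ((hfd_cont.comp h2).prodMk continuous_const))
      have := hΘ.comp_aestronglyMeasurable hy_meas
      simpa [hz, hw] using this
    · filter_upwards [ae_restrict_mem measurableSet_Ioc] with μ hμ
      have hμI : μ ∈ Set.Icc (0:ℝ) 1 := Set.Ioc_subset_Icc_self hμ
      have hb1 : |w μ k| ≤ 1 := by
        have := hwnorm μ hμI
        rw [pi_norm_le_iff_of_nonneg (by norm_num)] at this
        simpa [Real.norm_eq_abs] using this k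
      calc ‖w μ k * fderiv ℝ f (z t μ) (Pi.single k 1)‖
          = |w μ k| * ‖fderiv ℝ f (z t μ) (Pi.single k 1)‖ := by
            rw [norm_mul, Real.norm_eq_abs]
        _ ≤ 1 * (‖fderiv ℝ f (z t μ)‖ * ‖(Pi.single k 1 : Fin d → ℝ)‖) :=
            mul_le_mul hb1 ((fderiv ℝ f (z t μ)).le_opNorm _) (norm_nonneg _) (by norm_num)
        _ = ‖fderiv ℝ f (z t μ)‖ * ‖(Pi.single k 1 : Fin d → ℝ)‖ := one_mul _
        _ ≤ C * ‖(Pi.single k 1 : Fin d → ℝ)‖ :=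
            mul_le_mul_of_nonneg_right (hC _ (hKmem _ (hzbox t htI μ hμI))) (norm_nonneg _)
  rw [intervalIntegral.integral_finset_sum (fun k _ => hterm_int k)]
  apply Finset.sum_nonneg
  intro k _
  apply cheb (g := fun μ => fderiv ℝ f (z t μ) (Pi.single k 1)) (h := fun μ => w μ k)
  · -- AntitoneOn g
    intro μ hμ μ' hμ' hle
    apply grad_antitone hf hHess k (hzbox t htI μ hμ) (hzbox t htI μ' hμ')
    intro i
    have h1 := hymono' μ hμ μ' hμ' hle i
    simp only [hz, hw, Pi.add_apply, Pi.smul_apply, Pi.sub_apply, smul_eq_mul]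
    nlinarith [htI.1, htI.2]
  · -- AntitoneOn h
    intro μ hμ μ' hμ' hle
    have h1 := hymono' μ hμ μ' hμ' hle k
    simp only [hw, Pi.sub_apply]
    linarith
  · -- 0 ≤ h 0
    have h1 : y 0 k = ∫ _μ in (0:ℝ)..1, y 0 k := by simp
    have h2 : (∫ _μ in (0:ℝ)..1, y 0 k) ≤ ∫ μ in (0:ℝ)..1, y μ k :=
      intervalIntegral.integral_mono_on (by norm_num) intervalIntegrable_const (hyint k)
        (fun x hx => hymono' 0 (by norm_num) x hx hx.1 k)
    simp only [hw, Pi.sub_apply, hYbar]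
    linarith
  · -- mean zero
    simp only [hw, Pi.sub_apply]
    rw [intervalIntegral.integral_sub intervalIntegrable_const (hyint k)]
    simp [hYbar]
  · exact hterm_int k
  · simp only [hw, Pi.sub_apply]
    exact intervalIntegrable_const.sub (hyint k)
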